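/- Assume (H0) and d₁, d₂, l > 0. Then for every natural number k and every real τ, λ = 0 is not a root of the characteristic equation λ² + A_k·λ + B_k + (−b₁₁·λ + C_k)·exp(−λτ) = 0; equivalently, B_k + C_k > 0 and hence B_k + C_k ≠ 0. -/
import Mathlib


open Real

/-- Δ = M² − 4·K·(a·m + c·p)·(a·r₂ + c·d − c·r₀) with M = a·m + c·p + K·(a·r₂ + c·d). -/
noncomputable def Delta (r₀ r₂ K d a p c m : ℝ) : ℝ :=
  (a*m + c*p + K*(a*r₂ + c*d))^2 - 4*K*(a*m + c*p)*(a*r₂ + c*d - c*r₀)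

/-- The positive equilibrium predator density v⋆. -/
noncomputable def vstar (r₀ r₂ K d a p c m : ℝ) : ℝ :=
  (-(a*m + c*p + K*(a*r₂ + c*d)) + Real.sqrt (Delta r₀ r₂ K d a p c m)) / (2*K*(a*m + c*p))

/-- The positive equilibrium prey density u⋆ = (r₂ + m·v⋆)/c. -/
noncomputable def ustar (r₀ r₂ K d a p c m : ℝ) : ℝ := (r₂ + m * vstar r₀ r₂ K d a p c m) / c

/-- Linearization coefficient a₁₂. -/
noncomputable def a12 (r₀ r₂ K d a p c m : ℝ) : ℝ :=
  -K*r₀*ustar r₀ r₂ K d a p c m / (1 + K*vstar r₀ r₂ K d a p c m)^2 - p*ustar r₀ r₂ K d a p c m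

/-- Linearization coefficient a₂₁. -/
noncomputable def a21 (r₀ r₂ K d a p c m : ℝ) : ℝ := c * vstar r₀ r₂ K d a p c m

/-- Linearization coefficient a₂₂. -/
noncomputable def a22 (r₀ r₂ K d a p c m : ℝ) : ℝ := -m * vstar r₀ r₂ K d a p c m

/-- Linearization coefficient b₁₁. -/
noncomputable def b11 (r₀ r₂ K d a p c m : ℝ) : ℝ := -a * ustar r₀ r₂ K d a p c m

/-- A_k = (d₁ + d₂)·k²/l² − a₂₂. -/
noncomputable def Ak (r₀ r₂ K d a p c m d₁ d₂ l : ℝ) (k : ℕ) : ℝ :=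
  (d₁ + d₂)*(k:ℝ)^2/l^2 - a22 r₀ r₂ K d a p c m

/-- B_k = d₁·d₂·k⁴/l⁴ − a₂₂·d₁·k²/l² − a₁₂·a₂₁. -/
noncomputable def Bk (r₀ r₂ K d a p c m d₁ d₂ l : ℝ) (k : ℕ) : ℝ :=
  d₁*d₂*(k:ℝ)^4/l^4 - a22 r₀ r₂ K d a p c m * d₁*(k:ℝ)^2/l^2 - a12 r₀ r₂ K d a p c m * a21 r₀ r₂ K d a p c m

/-- C_k = −b₁₁·d₂·k²/l² + a₂₂·b₁₁. -/
noncomputable def Ck (r₀ r₂ K d a p c m d₁ d₂ l : ℝ) (k : ℕ) : ℝ :=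
  -(b11 r₀ r₂ K d a p c m)*d₂*(k:ℝ)^2/l^2 + a22 r₀ r₂ K d a p c m * b11 r₀ r₂ K d a p c m

/-- The characteristic equation at mode k with delay τ:
λ² + A_k·λ + B_k + (−b₁₁·λ + C_k)·exp(−λτ) = 0. -/
def charEq (r₀ r₂ K d a p c m d₁ d₂ l : ℝ) (k : ℕ) (τ : ℝ) (z : ℂ) : Prop :=
  z^2 + (Ak r₀ r₂ K d a p c m d₁ d₂ l k : ℂ)*z + (Bk r₀ r₂ K d a p c m d₁ d₂ l k : ℂ)
    + (-(b11 r₀ r₂ K d a p c m : ℂ)*z + (Ck r₀ r₂ K d a p c m d₁ d₂ l k : ℂ)) * Complex.exp (-z*(τ:ℂ)) = 0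

theorem stmt4 (r₀ r₂ K d a p c m d₁ d₂ l : ℝ) (hr₀ : 0 < r₀) (hr₂ : 0 < r₂) (hK : 0 < K) (hd : 0 < d) (ha : 0 < a) (hp : 0 < p) (hc : 0 < c) (hm : 0 < m)
    (hd₁ : 0 < d₁) (hd₂ : 0 < d₂) (hl : 0 < l)
    (hH0 : a*r₂ + c*d - c*r₀ < 0) :
    ∀ (k : ℕ) (τ : ℝ), ¬ charEq r₀ r₂ K d a p c m d₁ d₂ l k τ 0 ∧
      0 < Bk r₀ r₂ K d a p c m d₁ d₂ l k + Ck r₀ r₂ K d a p c m d₁ d₂ l k ∧ Bk r₀ r₂ K d a p c m d₁ d₂ l k + Ck r₀ r₂ K d a p c m d₁ d₂ l k ≠ 0 := by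
  have ham : 0 < a*m + c*p := by positivity
  have hv : 0 < vstar r₀ r₂ K d a p c m := by
    unfold vstar Delta
    have hden : 0 < 2*K*(a*m+c*p) := by positivity
    set M := a*m + c*p + K*(a*r₂ + c*d) with hMdef
    have hΔ : M^2 < M^2 - 4*K*(a*m+c*p)*(a*r₂+c*d-c*r₀) := by nlinarith
    have hs : M < Real.sqrt (M^2 - 4*K*(a*m+c*p)*(a*r₂+c*d-c*r₀)) := by
      calc M ≤ |M| := le_abs_self M
        _ = Real.sqrt (M^2) := (Real.sqrt_sq_eq_abs M).symm
        _ < _ := Real.sqrt_lt_sqrt (sq_nonneg M) hΔ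
    apply div_pos _ hden
    linarith
  set v := vstar r₀ r₂ K d a p c m with hvdef
  have hu : 0 < ustar r₀ r₂ K d a p c m := by
    unfold ustar
    apply div_pos _ hc
    nlinarith
  set u := ustar r₀ r₂ K d a p c m with hudef
  have ha12 : a12 r₀ r₂ K d a p c m < 0 := by
    unfold a12
    rw [← hvdef, ← hudef]
    have h1 : 0 < K*r₀*u/(1 + K*v)^2 := by positivity
    have h2 : 0 < p*u := by positivity
    have he : -K*r₀*u/(1 + K*v)^2 - p*u = -(K*r₀*u/(1 + K*v)^2) - p*u := by ring
    rw [he]; linarith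
  intro k τ
  have hBC : 0 < Bk r₀ r₂ K d a p c m d₁ d₂ l k + Ck r₀ r₂ K d a p c m d₁ d₂ l k := by
    unfold Bk Ck a22 a21 b11
    rw [← hvdef, ← hudef]
    have t1 : (0:ℝ) ≤ d₁*d₂*(k:ℝ)^4/l^4 := by positivity
    have t2 : (0:ℝ) ≤ m*v*d₁*(k:ℝ)^2/l^2 := by positivity
    have t3 : 0 < -(a12 r₀ r₂ K d a p c m) * (c*v) := by
      apply mul_pos (by linarith) (by positivity)
    have t4 : (0:ℝ) ≤ a*u*d₂*(k:ℝ)^2/l^2 := by positivity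
    have t5 : 0 < m*v*(a*u) := by positivity
    have he : d₁*d₂*(k:ℝ)^4/l^4 - (-m*v) * d₁*(k:ℝ)^2/l^2 - a12 r₀ r₂ K d a p c m * (c*v)
        + (-(-a*u)*d₂*(k:ℝ)^2/l^2 + (-m*v) * (-a*u))
        = d₁*d₂*(k:ℝ)^4/l^4 + m*v*d₁*(k:ℝ)^2/l^2 + (-(a12 r₀ r₂ K d a p c m) * (c*v))
        + a*u*d₂*(k:ℝ)^2/l^2 + m*v*(a*u) := by ring
    rw [he]; linarith
  refine ⟨?_, hBC, ne_of_gt hBC⟩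
  intro h
  unfold charEq at h
  simp [Complex.exp_zero] at h
  have h2 : ((Bk r₀ r₂ K d a p c m d₁ d₂ l k + Ck r₀ r₂ K d a p c m d₁ d₂ l k : ℝ) : ℂ) = 0 := by
    push_cast
    linear_combination h
  rw [Complex.ofReal_eq_zero] at h2
  linarith
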